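/- Let τ' be the product distribution on {0,1}ⁿ where each bit is Ber((1+δ)/2), with 0 < δ < 1/(4√n). For any y ∈ {0,1}ⁿ with C₁(y) ≥ n/2 + √n/4, the likelihood ratio satisfies τ'(y)/πₙ(y) ≥ 1 + δ√n/4. -/

import Mathlib

set_option maxHeartbeats 1000000


/-- Number of ones in a binary string. -/
def ones (n : ℕ) (y : Fin n → Bool) : ℕ := (Finset.univ.filter fun i => y i = true).card

theorem stmt_15 (n : ℕ) (δ : ℝ) (hδ0 : 0 < δ) (hδ1 : δ < 1 / (4 * Real.sqrt n))
    (y : Fin n → Bool) (hy : (n : ℝ) / 2 + Real.sqrt n / 4 ≤ (ones n y : ℝ)) :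
    ((1 + δ) / 2) ^ (ones n y) * ((1 - δ) / 2) ^ (n - ones n y) / ((1 / 2 : ℝ) ^ n)
      ≥ 1 + δ * Real.sqrt n / 4 := by
  rcases Nat.eq_zero_or_pos n with h0 | hn
  · subst h0
    simp [Real.sqrt_zero] at hδ1
    linarith
  set k := ones n y with hk
  have hkn : k ≤ n := by
    have := Finset.card_filter_le (Finset.univ : Finset (Fin n)) (fun i => y i = true)
    simpa [hk, ones] using this
  have hnpos : (0:ℝ) < n := by exact_mod_cast hn
  have hs : 0 < Real.sqrt n := Real.sqrt_pos.mpr hnpos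
  have hsn : Real.sqrt n * Real.sqrt n = n := Real.mul_self_sqrt hnpos.le
  have hs1 : 1 ≤ Real.sqrt n := by
    rw [show (1:ℝ) = Real.sqrt 1 by simp]
    exact Real.sqrt_le_sqrt (by exact_mod_cast hn)
  have hδs : δ * Real.sqrt n < 1/4 := by
    rw [lt_div_iff₀ (by positivity)] at hδ1
    nlinarith
  have hspos : 0 < δ * Real.sqrt n := mul_pos hδ0 hs
  have hδ1' : δ < 1 := by nlinarith
  have hn2k : n ≤ 2 * k := by
    have : (n:ℝ) ≤ 2 * k := by nlinarith
    exact_mod_cast this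
  set m := n - k with hm
  set p := k - m with hp
  have hkmp : k = m + p := by omega
  have hkmn : k + m = n := by omega
  have hmR : (m:ℝ) = n - k := by
    have h : (m:ℕ) + k = n := by omega
    have := congrArg (Nat.cast : ℕ → ℝ) h
    push_cast at this; linarith
  have hpR : (p:ℝ) = 2 * k - n := by
    have h : (p:ℕ) + n = 2 * k := by omega
    have := congrArg (Nat.cast : ℕ → ℝ) h
    push_cast at this; linarith
  have hmle : (m:ℝ) ≤ (n:ℝ)/2 := by rw [hmR]; nlinarith
  have hpge : Real.sqrt n / 2 ≤ (p:ℝ) := by rw [hpR]; linarith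
  -- simplify the LHS
  have key : ((1 + δ) / 2) ^ k * ((1 - δ) / 2) ^ m / ((1 / 2 : ℝ)) ^ n
      = (1 + δ) ^ k * (1 - δ) ^ m := by
    have h2 : ((1 / 2 : ℝ)) ^ n ≠ 0 := by positivity
    rw [div_eq_iff h2, ← hkmn, pow_add]
    field_simp
    simp only [div_pow, one_pow]; ring
  rw [key]
  have hsplit : (1 + δ) ^ k * (1 - δ) ^ m = (1 - δ^2) ^ m * (1 + δ) ^ p := by
    rw [hkmp, pow_add]
    rw [show (1 - δ^2 : ℝ) = (1 + δ) * (1 - δ) by ring, mul_pow]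
    ring
  rw [hsplit]
  -- key quantitative bounds, with s = δ√n
  have hnδ2 : (n:ℝ) * δ^2 = (δ * Real.sqrt n) * (δ * Real.sqrt n) := by
    rw [show (δ * Real.sqrt n) * (δ * Real.sqrt n) = δ^2 * (Real.sqrt n * Real.sqrt n) by ring,
      hsn]; ring
  have hAle : (m:ℝ) * δ^2 ≤ (δ * Real.sqrt n) * (δ * Real.sqrt n) / 2 := by
    linarith [mul_le_mul_of_nonneg_right hmle (sq_nonneg δ), hnδ2]
  have hA : (0:ℝ) ≤ 1 - m * δ^2 := by nlinarith
  have hBge : δ * Real.sqrt n / 2 ≤ (p:ℝ) * δ := by nlinarith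
  have hB : (0:ℝ) ≤ 1 + p * δ := by
    have : (0:ℝ) ≤ (p:ℝ) * δ := mul_nonneg (Nat.cast_nonneg p) hδ0.le
    linarith
  -- Bernoulli bounds
  have B1 : (1:ℝ) + p * δ ≤ (1 + δ) ^ p := one_add_mul_le_pow (by linarith) p
  have B2 : (1:ℝ) + m * (-(δ^2)) ≤ (1 + -(δ^2)) ^ m := one_add_mul_le_pow (by nlinarith) m
  have h1 : (1:ℝ) - m * δ^2 ≤ (1 - δ^2) ^ m := by
    have := B2
    rw [show (1 + -(δ^2) : ℝ) = 1 - δ^2 by ring] at this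
    linarith
  have hmul : (1 - m * δ^2) * (1 + p * δ) ≤ (1 - δ^2) ^ m * (1 + δ) ^ p :=
    mul_le_mul h1 B1 hB (le_trans hA h1)
  have hfin : 1 + δ * Real.sqrt n / 4 ≤ (1 - m * δ^2) * (1 + p * δ) := by
    nlinarith [mul_nonneg hA (sub_nonneg.mpr hBge),
      mul_nonneg (sub_nonneg.mpr hAle) (by linarith : (0:ℝ) ≤ 1 + δ * Real.sqrt n / 2),
      mul_nonneg (by linarith : (0:ℝ) ≤ 1/4 - δ * Real.sqrt n) hspos.le,
      mul_nonneg (by linarith : (0:ℝ) ≤ 1/4 - δ * Real.sqrt n)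
        (mul_nonneg hspos.le hspos.le)]
  linarith
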